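/- Let a group Γ act on a set X, let Λ ≤ Γ act freely on X, let G ≤ Γ be finite, and let x ∈ X be fixed by every element of G (G ⊆ Stab_Γ(x)). If Stab_Γ(x) is finite, then the set {λ ∈ Λ | λ⁻¹Gλ ⊆ Stab_Γ(x)} is a finite union of left cosets of Λ ∩ N_Γ(G); in particular the quotient of this set by the right multiplication action of Λ ∩ N_Γ(G) is finite. -/

import Mathlib

/-- Let `Γ` act on `X`, `Λ ≤ Γ` acting freely, `G ≤ Γ` finite, `x ∈ X` fixed by
every element of `G`. If `Stab_Γ(x)` is finite, then
`{λ ∈ Λ | λ⁻¹Gλ ⊆ Stab_Γ(x)}` is a finite union of cosets of `Λ ∩ N_Γ(G)`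
(for the equivalence `λ ∼ λ' ↔ λ'λ⁻¹ ∈ Λ ∩ N_Γ(G)`); in particular the set of
such cosets is finite. -/
theorem conj_into_stabilizer_finite_cosets {Γ X : Type*} [Group Γ] [MulAction Γ X]
    (Λ G : Subgroup Γ) [Finite G]
    (hfree : ∀ l ∈ Λ, ∀ x : X, l • x = x → l = 1) (x : X)
    (hGx : ∀ g ∈ G, g • x = x)
    (hstab : (MulAction.stabilizer Γ x : Set Γ).Finite) :
    (∃ F : Finset Γ,
      {l : Γ | l ∈ Λ ∧ ∀ g ∈ G, l⁻¹ * g * l ∈ MulAction.stabilizer Γ x} =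
        ⋃ f ∈ F, (fun n => n * f) '' ((Λ ⊓ Subgroup.normalizer (G : Set Γ) : Subgroup Γ) : Set Γ)) ∧
    {s : Set Γ | ∃ l : Γ, (l ∈ Λ ∧ ∀ g ∈ G, l⁻¹ * g * l ∈ MulAction.stabilizer Γ x) ∧
      s = (fun n => n * l) '' ((Λ ⊓ Subgroup.normalizer (G : Set Γ) : Subgroup Γ) : Set Γ)}.Finite := by
  classical
  set H : Subgroup Γ := Λ ⊓ Subgroup.normalizer (G : Set Γ) with hH
  set S : Set Γ := {l : Γ | l ∈ Λ ∧ ∀ g ∈ G, l⁻¹ * g * l ∈ MulAction.stabilizer Γ x}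
    with hSdef
  set coset : Γ → Set Γ := fun l => (fun n => n * l) '' (H : Set Γ) with hcosetdef
  have hmem_coset : ∀ l : Γ, l ∈ coset l := fun l => ⟨1, H.one_mem, one_mul l⟩
  -- if `l' * l⁻¹ ∈ H` the cosets agree
  have hsub : ∀ l l' : Γ, l' * l⁻¹ ∈ H → coset l ⊆ coset l' := by
    rintro l l' hc y ⟨n, hn, rfl⟩
    refine ⟨n * (l' * l⁻¹)⁻¹, H.mul_mem hn (H.inv_mem hc), ?_⟩
    group
  have hcoset_eq : ∀ l l' : Γ, l' * l⁻¹ ∈ H → coset l = coset l' := by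
    intro l l' hc
    refine Set.Subset.antisymm (hsub l l' hc) (hsub l' l ?_)
    have : l * l'⁻¹ = (l' * l⁻¹)⁻¹ := by group
    rw [this]; exact H.inv_mem hc
  -- `S` is stable under left multiplication by `H`
  have hSc : ∀ l ∈ S, ∀ n ∈ H, n * l ∈ S := by
    intro l hl n hn
    obtain ⟨hnΛ, hnN⟩ := Subgroup.mem_inf.mp hn
    refine ⟨Λ.mul_mem hnΛ hl.1, ?_⟩
    intro g hg
    have hginv : n⁻¹ * g * n ∈ G := by
      have := (Subgroup.mem_normalizer_iff.mp ((Subgroup.normalizer (G : Set Γ)).inv_mem hnN) g).mp hg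
      simpa using this
    have key : (n * l)⁻¹ * g * (n * l) = l⁻¹ * (n⁻¹ * g * n) * l := by group
    rw [key]
    exact hl.2 _ hginv
  -- elements of `S` with the same conjugation map differ by an element of `H`
  have hcent : ∀ l ∈ S, ∀ l' ∈ S,
      (∀ g ∈ G, l⁻¹ * g * l = l'⁻¹ * g * l') → l' * l⁻¹ ∈ H := by
    intro l hl l' hl' hconj
    have hcomm : ∀ g ∈ G, (l' * l⁻¹) * g = g * (l' * l⁻¹) := by
      intro g hg
      have := hconj g hg
      calc (l' * l⁻¹) * g = l' * (l⁻¹ * g * l) * l⁻¹ := by group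
        _ = l' * (l'⁻¹ * g * l') * l⁻¹ := by rw [this]
        _ = g * (l' * l⁻¹) := by group
    refine Subgroup.mem_inf.mpr ⟨Λ.mul_mem hl'.1 (Λ.inv_mem hl.1), ?_⟩
    set c := l' * l⁻¹
    refine Subgroup.mem_normalizer_iff.mpr fun h => ⟨fun hh => ?_, fun hh => ?_⟩
    · have := hcomm h hh
      have : c * h * c⁻¹ = h := by rw [this]; group
      rw [this]; exact hh
    · have := hcomm _ hh
      have h2 : c * (c * h * c⁻¹) * c⁻¹ = c * h * c⁻¹ := by rw [this]; group
      have h3 : h = c * h * c⁻¹ := by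
        calc h = c⁻¹ * (c * h * c⁻¹) * c := by group
          _ = c * h * c⁻¹ := by
            conv_lhs => rw [← h2]
            group
      rw [← h3] at hh; exact hh
  -- a representative for each coset
  set C : Set (Set Γ) := {s : Set Γ | ∃ l : Γ, l ∈ S ∧ s = coset l} with hCdef
  set rep : Set Γ → Γ := fun s => if h : ∃ l : Γ, l ∈ S ∧ s = coset l then h.choose else 1
    with hrepdef
  have hrep : ∀ s ∈ C, rep s ∈ S ∧ s = coset (rep s) := by
    intro s hs
    have h : ∃ l : Γ, l ∈ S ∧ s = coset l := hs
    simp only [hrepdef, dif_pos h]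
    exact h.choose_spec
  -- finiteness of the set of cosets
  have hC : C.Finite := by
    set j : Set Γ → (G → Γ) := fun s g => (rep s)⁻¹ * (g : Γ) * rep s with hjdef
    have hT : (Set.univ.pi fun _ : G => (MulAction.stabilizer Γ x : Set Γ)).Finite :=
      Set.Finite.pi fun _ => hstab
    have himg : j '' C ⊆ Set.univ.pi fun _ : G => (MulAction.stabilizer Γ x : Set Γ) := by
      rintro _ ⟨s, hs, rfl⟩
      intro g _
      exact (hrep s hs).1.2 g g.2
    have hinj : Set.InjOn j C := by
      intro s hs s' hs' hjj
      have hconj : ∀ g ∈ G, (rep s)⁻¹ * g * rep s = (rep s')⁻¹ * g * rep s' := by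
        intro g hg
        exact congrFun hjj ⟨g, hg⟩
      have := hcent _ (hrep s hs).1 _ (hrep s' hs').1 hconj
      rw [(hrep s hs).2, (hrep s' hs').2]
      exact hcoset_eq _ _ this
    exact Set.Finite.of_finite_image (hT.subset himg) hinj
  constructor
  · -- the finite union of cosets
    have hF : (rep '' C).Finite := hC.image rep
    refine ⟨hF.toFinset, ?_⟩
    ext l
    simp only [Set.Finite.mem_toFinset, Set.mem_iUnion, Set.mem_image, exists_prop]
    constructor
    · intro hl
      have hcl : coset l ∈ C := ⟨l, hl, rfl⟩
      refine ⟨rep (coset l), ⟨coset l, hcl, rfl⟩, ?_⟩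
      have heq := (hrep _ hcl).2
      have hm : l ∈ coset (rep (coset l)) := heq ▸ hmem_coset l
      obtain ⟨n, hn, hnl⟩ := hm
      exact ⟨n, hn, hnl⟩
    · rintro ⟨f, ⟨s, hs, rfl⟩, hlf⟩
      obtain ⟨n, hn, rfl⟩ := hlf
      exact hSc _ (hrep s hs).1 n hn
  · exact hC
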